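/- For p > 0, the function ε₃ = (p² e^p/(e^p - 1)²) ε₃', where ε₃' is defined piecewise by (e^{px} + e^{-px} - 2)/(2p²) on [0,1], (e^p + e^{-p})/p² - (1+e^{-p})e^{p(x-1)}/(2p²) - (1+e^p)e^{-p(x-1)}/(2p²) on [1,2], -1/p² + e^{-p}e^{p(x-2)}/(2p²) + e^p e^{-p(x-2)}/(2p²) on [2,3], and 0 elsewhere, satisfies the partition of unity ∑_{n∈ℤ} ε₃(x - n) = 1 for all x ∈ ℝ. -/
import Mathlib

open Set

noncomputable def eps3' (p : ℝ) : ℝ → ℝ := fun x =>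
  if x ∈ Set.Icc (0 : ℝ) 1 then (Real.exp (p * x) + Real.exp (-p * x) - 2) / (2 * p ^ 2)
  else if x ∈ Set.Icc (1 : ℝ) 2 then
    (Real.exp p + Real.exp (-p)) / p ^ 2
      - (1 + Real.exp (-p)) * Real.exp (p * (x - 1)) / (2 * p ^ 2)
      - (1 + Real.exp p) * Real.exp (-p * (x - 1)) / (2 * p ^ 2)
  else if x ∈ Set.Icc (2 : ℝ) 3 then
    -1 / p ^ 2 + Real.exp (-p) * Real.exp (p * (x - 2)) / (2 * p ^ 2)
      + Real.exp p * Real.exp (-p * (x - 2)) / (2 * p ^ 2)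
  else 0

noncomputable def eps3 (p : ℝ) : ℝ → ℝ := fun x =>
  (p ^ 2 * Real.exp p / (Real.exp p - 1) ^ 2) * eps3' p x

lemma eps3'_zero (p : ℝ) (hp : 0 < p) (y : ℝ) (hy : y < 0 ∨ 3 ≤ y) : eps3' p y = 0 := by
  have hp' : p ≠ 0 := hp.ne'
  unfold eps3'
  rcases hy with hy | hy
  · rw [if_neg, if_neg, if_neg] <;> simp [mem_Icc] <;> intro h <;> linarith
  · rcases eq_or_lt_of_le hy with h3 | h3
    · rw [if_neg, if_neg, if_pos]
      · rw [show p * (y - 2) = p from by rw [← h3]; ring,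
            show -p * (y - 2) = -p from by rw [← h3]; ring, Real.exp_neg]
        have he : Real.exp p ≠ 0 := (Real.exp_pos p).ne'
        field_simp
        ring
      · exact ⟨by linarith, by linarith⟩
      · simp [mem_Icc]; intro h; linarith
      · simp [mem_Icc]; intro h; linarith
    · rw [if_neg, if_neg, if_neg] <;> simp [mem_Icc] <;> intro h <;> linarith

lemma eps3'_key (p : ℝ) (hp : 0 < p) (t : ℝ) (ht0 : 0 ≤ t) (ht1 : t < 1) :
    eps3' p t + eps3' p (t + 1) + eps3' p (t + 2)
      = (Real.exp p - 1) ^ 2 / (p ^ 2 * Real.exp p) := by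
  have hp' : p ≠ 0 := hp.ne'
  have ha1 : 1 < Real.exp p := by
    have := Real.add_one_le_exp p
    nlinarith [Real.add_one_le_exp (p/2), Real.exp_pos (p/2)]
  have ha0 : Real.exp p ≠ 0 := (Real.exp_pos p).ne'
  rcases eq_or_lt_of_le ht0 with h0 | h0
  · subst h0
    have c1 : (0:ℝ) ∈ Icc (0:ℝ) 1 := by norm_num
    have c2 : (0:ℝ) + 1 ∈ Icc (0:ℝ) 1 := by norm_num
    have c4 : (0:ℝ) + 2 ∉ Icc (0:ℝ) 1 := by norm_num
    have c5 : (0:ℝ) + 2 ∈ Icc (1:ℝ) 2 := by norm_num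
    simp only [eps3', if_pos c1, if_pos c2, if_neg c4, if_pos c5]
    rw [show p * (0:ℝ) = 0 from by ring, show -p * (0:ℝ) = 0 from by ring,
        show p * ((0:ℝ)+1) = p from by ring, show -p * ((0:ℝ)+1) = -p from by ring,
        show p * ((0:ℝ)+2-1) = p from by ring, show -p * ((0:ℝ)+2-1) = -p from by ring,
        Real.exp_zero, Real.exp_neg]
    field_simp
    ring
  · have c1 : t ∈ Icc (0:ℝ) 1 := ⟨ht0, ht1.le⟩
    have c2 : t + 1 ∉ Icc (0:ℝ) 1 := by simp only [mem_Icc, not_and, not_le]; intro _; linarith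
    have c3 : t + 1 ∈ Icc (1:ℝ) 2 := ⟨by linarith, by linarith⟩
    have c4 : t + 2 ∉ Icc (0:ℝ) 1 := by simp only [mem_Icc, not_and, not_le]; intro _; linarith
    have c5 : t + 2 ∉ Icc (1:ℝ) 2 := by simp only [mem_Icc, not_and, not_le]; intro _; linarith
    have c6 : t + 2 ∈ Icc (2:ℝ) 3 := ⟨by linarith, by linarith⟩
    simp only [eps3', if_pos c1, if_neg c2, if_pos c3, if_neg c4, if_neg c5, if_pos c6]
    rw [show t + 1 - 1 = t from by ring, show t + 2 - 2 = t from by ring,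
        show -p * t = -(p * t) from by ring, Real.exp_neg p, Real.exp_neg (p * t)]
    have hb0 : Real.exp (p * t) ≠ 0 := (Real.exp_pos _).ne'
    field_simp
    ring

theorem stmt_17 (p : ℝ) (hp : 0 < p) :
    ∀ x : ℝ, ∑' n : ℤ, eps3 p (x - n) = 1 := by
  intro x
  have hp' : p ≠ 0 := hp.ne'
  have ha1 : 1 < Real.exp p := by
    have := Real.add_one_le_exp p; linarith
  have ha0 : Real.exp p ≠ 0 := (Real.exp_pos p).ne'
  set m : ℤ := ⌊x⌋ with hm
  have hm1 : (m : ℝ) ≤ x := Int.floor_le x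
  have hm2 : x < (m : ℝ) + 1 := Int.lt_floor_add_one x
  have hsupp : ∀ n : ℤ, n ∉ ({m - 2, m - 1, m} : Finset ℤ) → eps3 p (x - n) = 0 := by
    intro n hn
    simp only [Finset.mem_insert, Finset.mem_singleton] at hn
    push_neg at hn
    have hcase : n ≤ m - 3 ∨ m + 1 ≤ n := by omega
    have h0 : x - n < 0 ∨ 3 ≤ x - n := by
      rcases hcase with h | h
      · right
        have : (n : ℝ) ≤ (m : ℝ) - 3 := by exact_mod_cast h
        linarith
      · left
        have : (m : ℝ) + 1 ≤ (n : ℝ) := by exact_mod_cast h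
        linarith
    simp [eps3, eps3'_zero p hp _ h0]
  rw [tsum_eq_sum hsupp]
  have hne1 : (m - 2 : ℤ) ∉ ({m - 1, m} : Finset ℤ) := by
    simp only [Finset.mem_insert, Finset.mem_singleton]; omega
  have hne2 : (m - 1 : ℤ) ∉ ({m} : Finset ℤ) := by
    simp only [Finset.mem_singleton]; omega
  rw [Finset.sum_insert hne1, Finset.sum_insert hne2, Finset.sum_singleton]
  push_cast
  rw [show x - ((m : ℝ) - 2) = (x - m) + 2 from by ring,
      show x - ((m : ℝ) - 1) = (x - m) + 1 from by ring]
  have hk := eps3'_key p hp (x - m) (by linarith) (by linarith)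
  simp only [eps3]
  have : eps3' p (x - ↑m) + eps3' p (x - ↑m + 1) + eps3' p (x - ↑m + 2)
      = (Real.exp p - 1) ^ 2 / (p ^ 2 * Real.exp p) := hk
  have hne : Real.exp p - 1 ≠ 0 := by linarith
  have hmul : (p ^ 2 * Real.exp p / (Real.exp p - 1) ^ 2)
      * ((Real.exp p - 1) ^ 2 / (p ^ 2 * Real.exp p)) = 1 := by
    field_simp
  linear_combination (p ^ 2 * Real.exp p / (Real.exp p - 1) ^ 2) * hk + hmul
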